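/- Every couniversal weak equivalence in the canonical model structure on Cat is an acyclic cofibration, i.e., if f : A → B is a functor every pushout of which is an equivalence of categories, then f is an equivalence of categories that is injective on objects. -/

import Mathlib

set_option linter.unusedSectionVars false

open CategoryTheory

universe u

namespace CouniversalWE

variable {A : Type u} [Category.{u} A] {B : Type u} [Category.{u} B]

/-! ### The twisted collapse category `CC` -/

/-- Objects: objects of `A` different from `a₁`. -/
abbrev CC (a₁ : A) : Type u := {x : A // x ≠ a₁}

variable {a₁ : A}

instance : Category.{u} (CC a₁) where
  Hom x y := (x.1 ⟶ y.1) × ULift.{u} ℤ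
  id x := ⟨𝟙 x.1, ⟨0⟩⟩
  comp p q := ⟨p.1 ≫ q.1, ⟨p.2.down + q.2.down⟩⟩
  id_comp p := by obtain ⟨p1, ⟨n⟩⟩ := p; simp
  comp_id p := by obtain ⟨p1, ⟨n⟩⟩ := p; simp
  assoc p q r := by
    obtain ⟨p1, ⟨n⟩⟩ := p; obtain ⟨q1, ⟨m⟩⟩ := q; obtain ⟨r1, ⟨k⟩⟩ := r
    simp [add_assoc]

@[simp] lemma CC_id (x : CC a₁) : 𝟙 x = (⟨𝟙 x.1, ⟨0⟩⟩ : x ⟶ x) := rfl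

@[simp] lemma CC_comp {x y z : CC a₁} (p : x ⟶ y) (q : y ⟶ z) :
    p ≫ q = ⟨p.1 ≫ q.1, ⟨p.2.down + q.2.down⟩⟩ := rfl

/-- morphism constructor for `CC` -/
def cmk {x y : CC a₁} (γ : x.1 ⟶ y.1) (n : ℤ) : x ⟶ y := ⟨γ, ⟨n⟩⟩

@[simp] lemma cmk_comp {x y z : CC a₁} (γ : x.1 ⟶ y.1) (n : ℤ) (δ : y.1 ⟶ z.1) (m : ℤ) :
    cmk γ n ≫ cmk δ m = cmk (γ ≫ δ) (n + m) := rfl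

lemma CC_id' (x : CC a₁) : 𝟙 x = cmk (𝟙 x.1) 0 := rfl

lemma cmk_eq {x y : CC a₁} {γ δ : x.1 ⟶ y.1} {n m : ℤ} (h1 : γ = δ) (h2 : n = m) :
    cmk γ n = cmk δ m := by rw [h1, h2]

lemma CC_hom_ext {x y : CC a₁} (p : x ⟶ y) : p = cmk p.1 p.2.down := rfl

lemma CC_eqToHom' {x y : CC a₁} (h : x = y) :
    eqToHom h = cmk (eqToHom (congrArg Subtype.val h)) 0 := by subst h; rfl

lemma CC_eqToHom {x y : CC a₁} (h : x = y) :
    eqToHom h = ⟨eqToHom (congrArg Subtype.val h), ⟨0⟩⟩ := by subst h; rfl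

/-! ### The target category `DD` : a collapsed central extension of `B` -/

/-- `γ` factors through `b₀`. -/
def Fact (b₀ : B) {x y : B} (γ : x ⟶ y) : Prop :=
  ∃ (γ₁ : x ⟶ b₀) (γ₂ : b₀ ⟶ y), γ₁ ≫ γ₂ = γ

lemma Fact.precomp {b₀ : B} {x y z : B} {γ : y ⟶ z} (h : Fact b₀ γ) (δ : x ⟶ y) :
    Fact b₀ (δ ≫ γ) := by
  obtain ⟨γ₁, γ₂, rfl⟩ := h
  exact ⟨δ ≫ γ₁, γ₂, by simp⟩

lemma Fact.postcomp {b₀ : B} {x y z : B} {γ : x ⟶ y} (h : Fact b₀ γ) (δ : y ⟶ z) :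
    Fact b₀ (γ ≫ δ) := by
  obtain ⟨γ₁, γ₂, rfl⟩ := h
  exact ⟨γ₁, γ₂ ≫ δ, by simp⟩

lemma Fact.of_dom {b₀ : B} {x y : B} (h : x = b₀) (γ : x ⟶ y) : Fact b₀ γ :=
  ⟨eqToHom h, eqToHom h.symm ≫ γ, by simp⟩

lemma Fact.of_cod {b₀ : B} {x y : B} (h : y = b₀) (γ : x ⟶ y) : Fact b₀ γ :=
  ⟨γ ≫ eqToHom h, eqToHom h.symm, by simp⟩

/-- The relation on homs: equal underlying morphism in `B`, and equal integer
components unless the morphism factors through `b₀`. -/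
def DRel (b₀ : B) {x y : B} (p q : (x ⟶ y) × ULift.{u} ℤ) : Prop :=
  p.1 = q.1 ∧ (p.2 = q.2 ∨ Fact b₀ p.1)

/-- The collapsed central extension of `B` at `b₀`, as a one-field structure. -/
structure DD (b₀ : B) : Type u where
  as : B

instance (b₀ : B) : Category.{u} (DD b₀) where
  Hom x y := Quot (DRel b₀ (x := x.as) (y := y.as))
  id x := Quot.mk _ ⟨𝟙 x.as, ⟨0⟩⟩
  comp {x y z} p q :=
    Quot.lift₂
      (fun p q => Quot.mk (DRel b₀) ⟨p.1 ≫ q.1, ⟨p.2.down + q.2.down⟩⟩)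
      (fun p q q' hq => Quot.sound
        ⟨by rw [hq.1], hq.2.elim (fun h2 => Or.inl (by simp [h2]))
          (fun hf => Or.inr ((hf.precomp p.1)))⟩)
      (fun p p' q hp => Quot.sound
        ⟨by rw [hp.1], hp.2.elim (fun h2 => Or.inl (by simp [h2]))
          (fun hf => Or.inr ((hf.postcomp q.1)))⟩) p q
  id_comp p := by
    induction p using Quot.ind with
    | _ p => exact congrArg (Quot.mk _) (by obtain ⟨p1, ⟨n⟩⟩ := p; simp)
  comp_id p := by
    induction p using Quot.ind with
    | _ p => exact congrArg (Quot.mk _) (by obtain ⟨p1, ⟨n⟩⟩ := p; simp)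
  assoc p q r := by
    induction p using Quot.ind with | _ p => ?_
    induction q using Quot.ind with | _ q => ?_
    induction r using Quot.ind with | _ r => ?_
    exact congrArg (Quot.mk _) (by simp [add_assoc])

/-- morphism constructor for `DD` -/
def dmk (b₀ : B) {x y : B} (γ : x ⟶ y) (n : ℤ) :
    (⟨x⟩ : DD b₀) ⟶ (⟨y⟩ : DD b₀) :=
  Quot.mk _ ⟨γ, ⟨n⟩⟩

@[simp] lemma DD_id (b₀ : B) (x : DD b₀) : 𝟙 x = dmk b₀ (𝟙 x.as) 0 := rfl

@[simp] lemma DD_comp (b₀ : B) {x y z : B} (γ : x ⟶ y) (n : ℤ) (δ : y ⟶ z) (m : ℤ) :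
    dmk b₀ γ n ≫ dmk b₀ δ m = dmk b₀ (γ ≫ δ) (n + m) := rfl

lemma DD_eqToHom (b₀ : B) {x y : DD b₀} (h : x = y) :
    eqToHom h = dmk b₀ (eqToHom (congrArg DD.as h)) 0 := by
  subst h; rfl

lemma dmk_eq_of_fact (b₀ : B) {x y : B} {γ γ' : x ⟶ y} (n m : ℤ) (h : γ = γ')
    (hf : Fact b₀ γ) : dmk b₀ γ n = dmk b₀ γ' m :=
  Quot.sound ⟨h, Or.inr hf⟩

/-! ### The collapsing functor data -/

section G

variable (a₀ : A)
variable (a₁ : A)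

open Classical in
/-- replace `a₁` by `a₀` -/
noncomputable def rObj (x : A) : A := if x = a₁ then a₀ else x

lemma rObj_pos : rObj a₀ a₁ a₁ = a₀ := if_pos rfl

lemma rObj_neg {x : A} (h : x ≠ a₁) : rObj a₀ a₁ x = x := if_neg h

lemma rObj_ne (hne : a₀ ≠ a₁) (x : A) : rObj a₀ a₁ x ≠ a₁ := by
  by_cases h : x = a₁
  · rw [h, rObj_pos]; exact hne
  · rw [rObj_neg _ _ h]; exact h

open Classical in
/-- the weight function -/
noncomputable def pfun (x : A) : ℤ := if x = a₁ then 1 else 0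

lemma pfun_pos : pfun a₁ a₁ = 1 := if_pos rfl

lemma pfun_neg {x : A} (h : x ≠ a₁) : pfun a₁ x = 0 := if_neg h

variable (ψ : a₀ ≅ a₁)

open Classical in
/-- the canonical isomorphism `rObj x ≅ x` -/
noncomputable def rho (x : A) : rObj a₀ a₁ x ≅ x :=
  if h : x = a₁ then
    eqToIso (by rw [h, rObj_pos]) ≪≫ ψ ≪≫ eqToIso h.symm
  else eqToIso (rObj_neg _ _ h)

lemma rho_neg {x : A} (h : x ≠ a₁) : rho a₀ a₁ ψ x = eqToIso (rObj_neg _ _ h) := by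
  rw [rho, dif_neg h]

variable {f : A ⥤ B} {e : f.obj a₀ = f.obj a₁}

lemma f_rObj (e : f.obj a₀ = f.obj a₁) (x : A) : f.obj (rObj a₀ a₁ x) = f.obj x := by
  by_cases h : x = a₁
  · rw [h, rObj_pos]; rw [e]
  · rw [rObj_neg _ _ h]

lemma f_map_rho (hψ : f.map ψ.hom = eqToHom e) (x : A) :
    f.map (rho a₀ a₁ ψ x).hom = eqToHom (f_rObj a₀ a₁ e x) := by
  by_cases h : x = a₁
  · rw [rho, dif_pos h]
    simp [hψ, eqToHom_map]
  · rw [rho_neg _ _ _ h]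
    simp [eqToHom_map]

lemma f_map_rho_inv (hψ : f.map ψ.hom = eqToHom e) (x : A) :
    f.map (rho a₀ a₁ ψ x).inv = eqToHom (f_rObj a₀ a₁ e x).symm := by
  have h1 : f.map (rho a₀ a₁ ψ x).hom ≫ f.map (rho a₀ a₁ ψ x).inv = 𝟙 _ := by
    rw [← f.map_comp]; simp
  rw [f_map_rho _ _ _ hψ] at h1
  calc f.map (rho a₀ a₁ ψ x).inv
      = eqToHom (f_rObj a₀ a₁ e x).symm ≫
        (eqToHom (f_rObj a₀ a₁ e x) ≫ f.map (rho a₀ a₁ ψ x).inv) := by simp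
    _ = eqToHom (f_rObj a₀ a₁ e x).symm := by rw [h1, Category.comp_id]

variable (hne : a₀ ≠ a₁)

/-- The collapsing functor `A ⥤ CC a₁`. -/
noncomputable def gF : A ⥤ CC a₁ where
  obj x := ⟨rObj a₀ a₁ x, rObj_ne a₀ a₁ hne x⟩
  map {x y} α := ⟨(rho a₀ a₁ ψ x).hom ≫ α ≫ (rho a₀ a₁ ψ y).inv,
    ⟨pfun a₁ y - pfun a₁ x⟩⟩
  map_id x := by simp
  map_comp {x y z} α β := by
    simp only [CC_comp]
    congr 1
    · simp
    · congr 1; omega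

@[simp] lemma gF_obj (x : A) : (gF a₀ a₁ ψ hne).obj x = ⟨rObj a₀ a₁ x, rObj_ne a₀ a₁ hne x⟩ :=
  rfl

lemma gF_map {x y : A} (α : x ⟶ y) :
    (gF a₀ a₁ ψ hne).map α = cmk (x := (gF a₀ a₁ ψ hne).obj x) (y := (gF a₀ a₁ ψ hne).obj y)
      ((rho a₀ a₁ ψ x).hom ≫ α ≫ (rho a₀ a₁ ψ y).inv) (pfun a₁ y - pfun a₁ x) := rfl

/-- the base object of `CC` -/
noncomputable def c0 : CC a₁ := ⟨rObj a₀ a₁ a₁, rObj_ne a₀ a₁ hne a₁⟩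

/-- the base object of `B` -/
noncomputable def b0 (f : A ⥤ B) : B := f.obj (rObj a₀ a₁ a₁)

variable (f)

/-- The functor `B ⥤ DD b₀`. -/
def topF (b₀ : B) : B ⥤ DD b₀ where
  obj x := ⟨x⟩
  map γ := dmk b₀ γ 0
  map_id x := by simp
  map_comp α β := by simp

/-- The functor `CC a₁ ⥤ DD b₀` induced by `f`. -/
def incF (b₀ : B) : CC a₁ ⥤ DD b₀ where
  obj x := ⟨f.obj x.1⟩
  map {x y} p := dmk b₀ (f.map p.1) p.2.down
  map_id x := by
    simp only [CC_id, DD_id]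
    exact congrArg (Quot.mk _) (by simp)
  map_comp {x y z} p q := by
    simp only [CC_comp, DD_comp]
    exact congrArg (Quot.mk _) (by simp)

end G

section Square

variable (a₀ a₁ : A) (ψ : a₀ ≅ a₁) (hne : a₀ ≠ a₁) (f : A ⥤ B)
  (e : f.obj a₀ = f.obj a₁)

@[simp] lemma topF_obj (b₀ : B) (x : B) : (topF b₀).obj x = ⟨x⟩ := rfl

@[simp] lemma topF_map (b₀ : B) {x y : B} (γ : x ⟶ y) : (topF b₀).map γ = dmk b₀ γ 0 := rfl

@[simp] lemma incF_obj (b₀ : B) (x : CC a₁) : (incF a₁ f b₀).obj x = ⟨f.obj x.1⟩ := rfl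

@[simp] lemma incF_map (b₀ : B) {x y : CC a₁} (γ : x.1 ⟶ y.1) (n : ℤ) :
    (incF a₁ f b₀).map (cmk γ n) = dmk b₀ (f.map γ) n := rfl

lemma dmk_eq (b₀ : B) {x y : B} {γ δ : x ⟶ y} {n m : ℤ} (h1 : γ = δ) (h2 : n = m) :
    dmk b₀ γ n = dmk b₀ δ m := by rw [h1, h2]

lemma b0_eq : b0 a₀ a₁ f = f.obj a₀ := by rw [b0, rObj_pos]

theorem square_eq (hψ : f.map ψ.hom = eqToHom e) :
    f ⋙ topF (b0 a₀ a₁ f) = gF a₀ a₁ ψ hne ⋙ incF a₁ f (b0 a₀ a₁ f) := by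
  have hobj : ∀ x : A, (f ⋙ topF (b0 a₀ a₁ f)).obj x
      = (gF a₀ a₁ ψ hne ⋙ incF a₁ f (b0 a₀ a₁ f)).obj x := by
    intro x
    show DD.mk (f.obj x) = DD.mk (f.obj (rObj a₀ a₁ x))
    rw [f_rObj a₀ a₁ e x]
  refine CategoryTheory.Functor.ext hobj ?_
  intro x y α
  have hfirst : f.map ((rho a₀ a₁ ψ x).hom ≫ α ≫ (rho a₀ a₁ ψ y).inv)
      = eqToHom (f_rObj a₀ a₁ e x) ≫ f.map α ≫ eqToHom (f_rObj a₀ a₁ e y).symm := by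
    simp [f_map_rho a₀ a₁ ψ hψ, f_map_rho_inv a₀ a₁ ψ hψ]
  have hmid : (gF a₀ a₁ ψ hne ⋙ incF a₁ f (b0 a₀ a₁ f)).map α
      = dmk (b0 a₀ a₁ f) (f.map ((rho a₀ a₁ ψ x).hom ≫ α ≫ (rho a₀ a₁ ψ y).inv))
        (pfun a₁ y - pfun a₁ x) := rfl
  show dmk _ (f.map α) 0 = _
  rw [hmid, hfirst, DD_eqToHom, DD_eqToHom]
  erw [DD_comp]
  generalize_proofs p1 p2 p3 p4
  dsimp only [Functor.comp_obj, topF_obj, incF, gF_obj] at p1 p2 p3 p4 ⊢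
  simp only [Category.assoc, eqToHom_trans, eqToHom_refl, Category.id_comp,
    Category.comp_id, eqToHom_trans_assoc, zero_add, add_zero]
  by_cases hy : y = a₁
  · refine dmk_eq_of_fact _ _ _ rfl (Fact.of_cod ?_ _)
    rw [hy, b0, rObj_pos]; exact e.symm
  · by_cases hx : x = a₁
    · refine dmk_eq_of_fact _ _ _ rfl (Fact.of_dom ?_ _)
      rw [hx, b0, rObj_pos]; exact e.symm
    · rw [pfun_neg _ hx, pfun_neg _ hy]; norm_num

end Square


section Desc

variable {a₀ a₁ : A} {ψ : a₀ ≅ a₁} {hne : a₀ ≠ a₁} {f : A ⥤ B}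
  {e : f.obj a₀ = f.obj a₁}
  {E : Type u} [Category.{u} E] {uF : B ⥤ E} {vF : CC a₁ ⥤ E}

lemma gobj_eq (hne : a₀ ≠ a₁) (x : CC a₁) : (gF a₀ a₁ ψ hne).obj x.1 = x :=
  Subtype.ext (rObj_neg a₀ a₁ x.2)

lemma objEq (cond : f ⋙ uF = gF a₀ a₁ ψ hne ⋙ vF) (x : CC a₁) :
    vF.obj x = uF.obj (f.obj x.1) := by
  have h1 := Functor.congr_obj cond x.1
  rw [Functor.comp_obj, Functor.comp_obj, gobj_eq hne x] at h1
  exact h1.symm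

lemma gmap_eq (hne : a₀ ≠ a₁) {x y : CC a₁} (α : x.1 ⟶ y.1) :
    (gF a₀ a₁ ψ hne).map α
      = eqToHom (gobj_eq (ψ := ψ) hne x) ≫ cmk α 0 ≫ eqToHom (gobj_eq (ψ := ψ) hne y).symm := by
  rw [CC_eqToHom', CC_eqToHom', cmk_comp, cmk_comp, gF_map,
    rho_neg a₀ a₁ ψ x.2, rho_neg a₀ a₁ ψ y.2, pfun_neg _ x.2, pfun_neg _ y.2]
  exact cmk_eq (by simp) (by norm_num)

lemma mapv (cond : f ⋙ uF = gF a₀ a₁ ψ hne ⋙ vF) {x y : CC a₁} (α : x.1 ⟶ y.1) :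
    vF.map (cmk α 0)
      = eqToHom (objEq cond x) ≫ uF.map (f.map α) ≫ eqToHom (objEq cond y).symm := by
  have hc := Functor.congr_hom cond α
  rw [Functor.comp_map, Functor.comp_map, gmap_eq hne α] at hc
  rw [vF.map_comp, vF.map_comp, eqToHom_map, eqToHom_map] at hc
  rw [hc]
  simp [-gF_obj]

/-- the canonical automorphism of `vF.obj x` -/
def tauA (vF : CC a₁ ⥤ E) (x : CC a₁) : Aut (vF.obj x) where
  hom := vF.map (cmk (𝟙 x.1) 1)
  inv := vF.map (cmk (𝟙 x.1) (-1))
  hom_inv_id := by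
    rw [← vF.map_comp, cmk_comp]
    have : cmk (x := x) (𝟙 x.1 ≫ 𝟙 x.1) (1 + -1) = 𝟙 x := by rw [CC_id']; norm_num
    rw [this, vF.map_id]
  inv_hom_id := by
    rw [← vF.map_comp, cmk_comp]
    have : cmk (x := x) (𝟙 x.1 ≫ 𝟙 x.1) (-1 + 1) = 𝟙 x := by rw [CC_id']; norm_num
    rw [this, vF.map_id]

@[simp] lemma aut_one_hom {X : E} : (1 : Aut X).hom = 𝟙 X := rfl

lemma aut_inv_hom {X : E} (σ : Aut X) : (σ⁻¹ : Aut X).hom = σ.inv := rfl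

lemma aut_zpow_add {X : E} (σ : Aut X) (a b : ℤ) :
    (σ ^ (a + b)).hom = (σ ^ a).hom ≫ (σ ^ b).hom := by
  rw [add_comm, zpow_add]; rfl

@[simp] lemma tauA_hom (vF : CC a₁ ⥤ E) (x : CC a₁) :
    (tauA vF x).hom = vF.map (cmk (𝟙 x.1) 1) := rfl

lemma vmap_z (x : CC a₁) (n : ℤ) :
    vF.map (cmk (𝟙 x.1) n) = ((tauA vF x) ^ n).hom := by
  induction n using Int.induction_on with
  | zero => rw [zpow_zero, aut_one_hom, ← CC_id', vF.map_id]
  | succ i ih =>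
      have hd : cmk (x := x) (𝟙 x.1) ((i : ℤ) + 1) = cmk (𝟙 x.1) (i : ℤ) ≫ cmk (𝟙 x.1) 1 := by
        rw [cmk_comp]; exact cmk_eq (by simp) rfl
      rw [hd, vF.map_comp, ih, aut_zpow_add, zpow_one]
      rfl
  | pred i ih =>
      have hs : (-(i : ℤ) - 1) = (-(i : ℤ)) + (-1) := by ring
      have hd : cmk (x := x) (𝟙 x.1) (-(i : ℤ) - 1)
          = cmk (𝟙 x.1) (-(i : ℤ)) ≫ cmk (𝟙 x.1) (-1) := by
        rw [cmk_comp]; exact cmk_eq (by simp) hs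
      rw [hd, vF.map_comp, ih, hs, aut_zpow_add, zpow_neg_one, aut_inv_hom]
      rfl

lemma tau_central {x y : CC a₁} (m : x ⟶ y) :
    vF.map m ≫ (tauA vF y).hom = (tauA vF x).hom ≫ vF.map m := by
  rw [tauA_hom, tauA_hom, ← vF.map_comp, ← vF.map_comp]
  apply congrArg vF.map
  conv_lhs => rw [CC_hom_ext m]
  conv_rhs => rw [CC_hom_ext m]
  rw [cmk_comp, cmk_comp]
  exact cmk_eq (by simp) (add_comm _ _)

lemma vmap_decomp {x y : CC a₁} (m : x ⟶ y) :
    vF.map m = vF.map (cmk m.1 0) ≫ ((tauA vF y) ^ (m.2.down)).hom := by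
  rw [← vmap_z, ← vF.map_comp, cmk_comp]
  apply congrArg vF.map
  conv_lhs => rw [CC_hom_ext m]
  exact cmk_eq (by simp) (by simp)

lemma tau_c0 (cond : f ⋙ uF = gF a₀ a₁ ψ hne ⋙ vF) (hψ : f.map ψ.hom = eqToHom e) :
    tauA vF (c0 a₀ a₁ hne) = 1 := by
  have hgg : (gF a₀ a₁ ψ hne).obj a₀ = (gF a₀ a₁ ψ hne).obj a₁ := by
    apply Subtype.ext
    show rObj a₀ a₁ a₀ = rObj a₀ a₁ a₁
    rw [rObj_pos, rObj_neg a₀ a₁ hne]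
  have H : vF.obj ((gF a₀ a₁ ψ hne).obj a₀) = vF.obj ((gF a₀ a₁ ψ hne).obj a₁) :=
    congrArg vF.obj hgg
  have h1 : vF.map ((gF a₀ a₁ ψ hne).map ψ.hom) = eqToHom H := by
    have hc := Functor.congr_hom cond ψ.hom
    rw [Functor.comp_map, Functor.comp_map, hψ, eqToHom_map] at hc
    calc vF.map ((gF a₀ a₁ ψ hne).map ψ.hom)
        = eqToHom (Functor.congr_obj cond a₀).symm ≫
            (eqToHom (Functor.congr_obj cond a₀) ≫ vF.map ((gF a₀ a₁ ψ hne).map ψ.hom)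
              ≫ eqToHom (Functor.congr_obj cond a₁).symm) ≫
            eqToHom (Functor.congr_obj cond a₁) := by simp [-gF_obj]
      _ = eqToHom (Functor.congr_obj cond a₀).symm ≫ eqToHom (congrArg uF.obj e) ≫
            eqToHom (Functor.congr_obj cond a₁) := by rw [← hc]
      _ = eqToHom H := by simp [-gF_obj]
  have hχ : pfun a₁ a₁ - pfun a₁ a₀ = 1 := by
    rw [pfun_pos, pfun_neg _ hne]; norm_num
  have hgψ : (gF a₀ a₁ ψ hne).map ψ.hom
      = cmk ((rho a₀ a₁ ψ a₀).hom ≫ ψ.hom ≫ (rho a₀ a₁ ψ a₁).inv) 1 := by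
    rw [gF_map]
    show cmk _ (pfun a₁ a₁ - pfun a₁ a₀) = _
    rw [hχ]
  have h2 : vF.map (cmk (x := (gF a₀ a₁ ψ hne).obj a₀) (y := (gF a₀ a₁ ψ hne).obj a₁)
      ((rho a₀ a₁ ψ a₀).hom ≫ ψ.hom ≫ (rho a₀ a₁ ψ a₁).inv) 0) = eqToHom H := by
    rw [mapv cond]
    erw [f.map_comp, f.map_comp, f_map_rho a₀ a₁ ψ hψ, f_map_rho_inv a₀ a₁ ψ hψ, hψ]
    simp [eqToHom_map]
    erw [eqToHom_trans, eqToHom_trans]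
  have hdec : (gF a₀ a₁ ψ hne).map ψ.hom
      = cmk ((rho a₀ a₁ ψ a₀).hom ≫ ψ.hom ≫ (rho a₀ a₁ ψ a₁).inv) 0
        ≫ cmk (𝟙 ((gF a₀ a₁ ψ hne).obj a₁).1) 1 := by
    rw [hgψ, cmk_comp]
    exact cmk_eq (by simp) (by norm_num)
  have h3 : eqToHom H = eqToHom H ≫ (tauA vF ((gF a₀ a₁ ψ hne).obj a₁)).hom := by
    conv_lhs => rw [← h1]
    rw [hdec, vF.map_comp, h2, tauA_hom]
  have h4 : (tauA vF ((gF a₀ a₁ ψ hne).obj a₁)).hom = 𝟙 _ := by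
    calc (tauA vF ((gF a₀ a₁ ψ hne).obj a₁)).hom
        = eqToHom H.symm ≫ (eqToHom H ≫ (tauA vF ((gF a₀ a₁ ψ hne).obj a₁)).hom) := by simp [-gF_obj]
      _ = eqToHom H.symm ≫ eqToHom H := by rw [← h3]
      _ = 𝟙 _ := by simp [-gF_obj]
  exact Iso.ext h4

end Desc

section Sig

variable {a₀ a₁ : A} {ψ : a₀ ≅ a₁} {hne : a₀ ≠ a₁} {f : A ⥤ B}
  {e : f.obj a₀ = f.obj a₁}
  {E : Type u} [Category.{u} E] {uF : B ⥤ E} {vF : CC a₁ ⥤ E}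

open Classical in
/-- a choice of essential preimage avoiding `a₁`, with base point sent to `c0`. -/
noncomputable def EJ (a₀ : A) (hne : a₀ ≠ a₁) (f : A ⥤ B) (e : f.obj a₀ = f.obj a₁)
    [f.EssSurj] (b : B) :
    Σ' x : CC a₁, f.obj x.1 ≅ b :=
  if hb : b = b0 a₀ a₁ f then ⟨c0 a₀ a₁ hne, eqToIso hb.symm⟩
  else if hp : f.objPreimage b = a₁ then
    ⟨c0 a₀ a₁ hne,
      eqToIso (show f.obj (c0 a₀ a₁ hne).1 = f.obj (f.objPreimage b) by
        show f.obj (rObj a₀ a₁ a₁) = _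
        rw [rObj_pos, hp]
        exact e) ≪≫ f.objObjPreimageIso b⟩
  else ⟨⟨f.objPreimage b, hp⟩, f.objObjPreimageIso b⟩

lemma EJ_b0 [f.EssSurj] :
    EJ a₀ hne f e (b0 a₀ a₁ f) = ⟨c0 a₀ a₁ hne, Iso.refl _⟩ := by
  rw [EJ, dif_pos rfl]
  rfl

variable [f.Full] [f.Faithful] [f.EssSurj]

/-- the comparison iso -/
noncomputable def Kiso (cond : f ⋙ uF = gF a₀ a₁ ψ hne ⋙ vF)
    (e : f.obj a₀ = f.obj a₁) (b : B) :
    vF.obj (EJ a₀ hne f e b).1 ≅ uF.obj b :=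
  eqToIso (objEq cond (EJ a₀ hne f e b).1) ≪≫ uF.mapIso (EJ a₀ hne f e b).2

/-- the universal natural automorphism on `uF` -/
noncomputable def sig (cond : f ⋙ uF = gF a₀ a₁ ψ hne ⋙ vF)
    (e : f.obj a₀ = f.obj a₁) (b : B) : Aut (uF.obj b) :=
  (Kiso cond e b).conjAut (tauA vF (EJ a₀ hne f e b).1)

lemma sig_hom (cond : f ⋙ uF = gF a₀ a₁ ψ hne ⋙ vF) (b : B) :
    (sig cond e b).hom
      = (Kiso cond e b).inv ≫ (tauA vF (EJ a₀ hne f e b).1).hom ≫ (Kiso cond e b).hom := by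
  rw [sig, Iso.conjAut_apply]
  rfl

lemma sig_zpow_hom (cond : f ⋙ uF = gF a₀ a₁ ψ hne ⋙ vF) (b : B) (n : ℤ) :
    ((sig cond e b) ^ n).hom
      = (Kiso cond e b).inv ≫ ((tauA vF (EJ a₀ hne f e b).1) ^ n).hom ≫ (Kiso cond e b).hom := by
  rw [sig, ← map_zpow, Iso.conjAut_apply]
  rfl

lemma sig_b0 (cond : f ⋙ uF = gF a₀ a₁ ψ hne ⋙ vF) (hψ : f.map ψ.hom = eqToHom e) :
    sig cond e (b0 a₀ a₁ f) = 1 := by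
  rw [sig]
  have h1 : (EJ a₀ hne f e (b0 a₀ a₁ f)).1 = c0 a₀ a₁ hne := by rw [EJ_b0]
  rw [show tauA vF (EJ a₀ hne f e (b0 a₀ a₁ f)).1 = 1 from by rw [h1, tau_c0 cond hψ]]
  exact map_one _

lemma signat1 (cond : f ⋙ uF = gF a₀ a₁ ψ hne ⋙ vF) {b b' : B} (β : b ⟶ b') :
    uF.map β ≫ (sig cond e b').hom = (sig cond e b).hom ≫ uF.map β := by
  set x := (EJ a₀ hne f e b).1 with hx
  set J := (EJ a₀ hne f e b).2 with hJ
  set x' := (EJ a₀ hne f e b').1 with hx'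
  set J' := (EJ a₀ hne f e b').2 with hJ'
  set α := f.preimage (J.hom ≫ β ≫ J'.inv) with hα
  have hfα : f.map α = J.hom ≫ β ≫ J'.inv := f.map_preimage _
  have h₁ := mapv cond (x := x) (y := x') α
  rw [hfα] at h₁
  have h₂ := tau_central (vF := vF) (cmk (x := x) (y := x') α 0)
  have A1 : uF.map β ≫ uF.map J'.inv = uF.map J.inv ≫ uF.map (J.hom ≫ β ≫ J'.inv) := by
    rw [← uF.map_comp, ← uF.map_comp]
    apply congrArg uF.map
    simp
  have A2 : uF.map (J.hom ≫ β ≫ J'.inv) ≫ eqToHom (objEq cond x').symm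
      = eqToHom (objEq cond x).symm ≫ vF.map (cmk (x := x) (y := x') α 0) := by
    rw [h₁]; simp
  have A4 : vF.map (cmk (x := x) (y := x') α 0) ≫ eqToHom (objEq cond x')
      = eqToHom (objEq cond x) ≫ uF.map (J.hom ≫ β ≫ J'.inv) := by
    rw [h₁]; simp
  have A5 : uF.map (J.hom ≫ β ≫ J'.inv) ≫ uF.map J'.hom = uF.map J.hom ≫ uF.map β := by
    rw [← uF.map_comp, ← uF.map_comp]
    apply congrArg uF.map
    simp
  have A1' := reassoc_of% A1
  have A2' := reassoc_of% A2
  have A4' := reassoc_of% A4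
  have A5' := reassoc_of% A5
  have h₂' := reassoc_of% h₂
  rw [sig_hom cond, sig_hom cond]
  show uF.map β ≫ (Kiso cond e b').inv ≫ _ = _
  rw [show (Kiso cond e b').inv = uF.map J'.inv ≫ eqToHom (objEq cond x').symm from by
    rw [Kiso]; rfl]
  rw [show (Kiso cond e b').hom = eqToHom (objEq cond x') ≫ uF.map J'.hom from by
    rw [Kiso]; rfl]
  rw [show (Kiso cond e b).inv = uF.map J.inv ≫ eqToHom (objEq cond x).symm from by
    rw [Kiso]; rfl]
  rw [show (Kiso cond e b).hom = eqToHom (objEq cond x) ≫ uF.map J.hom from by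
    rw [Kiso]; rfl]
  simp only [Category.assoc]
  rw [A1', A2', h₂', A4', A5]

lemma signat (cond : f ⋙ uF = gF a₀ a₁ ψ hne ⋙ vF) {b b' : B} (β : b ⟶ b') (n : ℤ) :
    uF.map β ≫ ((sig cond e b') ^ n).hom = ((sig cond e b) ^ n).hom ≫ uF.map β := by
  have hinv : uF.map β ≫ (sig cond e b').inv = (sig cond e b).inv ≫ uF.map β := by
    erw [Iso.comp_inv_eq, Category.assoc, signat1 cond β, Iso.inv_hom_id_assoc]
  induction n using Int.induction_on with
  | zero => simp
  | succ i ih =>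
      rw [aut_zpow_add, aut_zpow_add, ← Category.assoc, ih, zpow_one, zpow_one,
        Category.assoc, signat1 cond β]
      simp only [Category.assoc]
  | pred i ih =>
      have hs : (-(i : ℤ) - 1) = (-(i : ℤ)) + (-1) := by ring
      rw [hs, aut_zpow_add, aut_zpow_add, ← Category.assoc, ih, zpow_neg_one, zpow_neg_one,
        aut_inv_hom, aut_inv_hom, Category.assoc, hinv]
      simp only [Category.assoc]

lemma sig_image (cond : f ⋙ uF = gF a₀ a₁ ψ hne ⋙ vF) (y : CC a₁) :
    sig cond e (f.obj y.1) = (eqToIso (objEq cond y)).conjAut (tauA vF y) := by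
  set x := (EJ a₀ hne f e (f.obj y.1)).1 with hx
  set J := (EJ a₀ hne f e (f.obj y.1)).2 with hJ
  set α := f.preimage J.hom with hα
  have hfα : f.map α = J.hom := f.map_preimage _
  have h₁ := mapv cond (x := x) (y := y) α
  rw [hfα] at h₁
  have h₂ := tau_central (vF := vF) (cmk (x := x) (y := y) α 0)
  have A4 : vF.map (cmk (x := x) (y := y) α 0) ≫ eqToHom (objEq cond y)
      = eqToHom (objEq cond x) ≫ uF.map J.hom := by
    rw [h₁]; simp
  have A2 : eqToHom (objEq cond x).symm ≫ vF.map (cmk (x := x) (y := y) α 0)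
      = uF.map J.hom ≫ eqToHom (objEq cond y).symm := by
    rw [h₁]; simp
  apply Iso.ext
  rw [Iso.conjAut_apply]
  show (sig cond e (f.obj y.1)).hom
      = (eqToIso (objEq cond y)).inv ≫ (tauA vF y).hom ≫ (eqToIso (objEq cond y)).hom
  rw [sig_hom cond]
  rw [show (Kiso cond e (f.obj y.1)).inv = uF.map J.inv ≫ eqToHom (objEq cond x).symm from by
    rw [Kiso]; rfl]
  rw [show (Kiso cond e (f.obj y.1)).hom = eqToHom (objEq cond x) ≫ uF.map J.hom from by
    rw [Kiso]; rfl]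
  have h₂' := reassoc_of% h₂
  have A4' := reassoc_of% A4
  have A2' := reassoc_of% A2
  simp only [Category.assoc, eqToIso.hom, eqToIso.inv]
  rw [← A4, ← h₂', A2']
  simp

lemma sig_image_zpow (cond : f ⋙ uF = gF a₀ a₁ ψ hne ⋙ vF) (y : CC a₁) (n : ℤ) :
    ((sig cond e (f.obj y.1)) ^ n).hom
      = eqToHom (objEq cond y).symm ≫ ((tauA vF y) ^ n).hom ≫ eqToHom (objEq cond y) := by
  rw [sig_image cond y, ← map_zpow, Iso.conjAut_apply]
  rfl

end Sig

section DescW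

variable {a₀ a₁ : A} {ψ : a₀ ≅ a₁} {hne : a₀ ≠ a₁} {f : A ⥤ B}
  {e : f.obj a₀ = f.obj a₁}
  {E : Type u} [Category.{u} E] {uF : B ⥤ E} {vF : CC a₁ ⥤ E}
  [f.Full] [f.Faithful] [f.EssSurj]

/-- The descended functor out of the pushout candidate. -/
noncomputable def descW (cond : f ⋙ uF = gF a₀ a₁ ψ hne ⋙ vF)
    (hψ : f.map ψ.hom = eqToHom e) : DD (b0 a₀ a₁ f) ⥤ E where
  obj b := uF.obj b.as
  map {b b'} q :=
    Quot.lift (fun p => uF.map p.1 ≫ ((sig cond e b'.as) ^ (p.2.down)).hom)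
      (by
        rintro p q ⟨h1, h2⟩
        rcases h2 with h2 | hf
        · rw [h1, h2]
        · have key : ∀ (γ : b.as ⟶ b'.as), Fact (b0 a₀ a₁ f) γ → ∀ (k : ℤ),
              uF.map γ ≫ ((sig cond e b'.as) ^ k).hom = uF.map γ := by
            rintro γ ⟨γ₁, γ₂, hγ⟩ k
            rw [← hγ, uF.map_comp, Category.assoc, signat cond γ₂ k,
              sig_b0 cond hψ, one_zpow, aut_one_hom, Category.id_comp]
          rw [← h1, key p.1 hf, key p.1 hf]) q
  map_id b := by
    show uF.map (𝟙 b.as) ≫ ((sig cond e b.as) ^ ((0 : ℤ))).hom = 𝟙 _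
    simp
  map_comp {b b' b''} p q := by
    induction p using Quot.ind with | _ p => ?_
    induction q using Quot.ind with | _ q => ?_
    show uF.map (p.1 ≫ q.1) ≫ ((sig cond e b''.as) ^ (p.2.down + q.2.down)).hom = _
    have hn := reassoc_of% (signat (e := e) cond q.1 p.2.down)
    rw [uF.map_comp, aut_zpow_add]
    show _ = (uF.map p.1 ≫ _) ≫ (uF.map q.1 ≫ _)
    simp only [Category.assoc]
    rw [hn]

lemma desc_fac_left (cond : f ⋙ uF = gF a₀ a₁ ψ hne ⋙ vF)
    (hψ : f.map ψ.hom = eqToHom e) :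
    topF (b0 a₀ a₁ f) ⋙ descW cond hψ = uF := by
  refine CategoryTheory.Functor.ext (fun b => rfl) (fun b b' γ => ?_)
  show uF.map γ ≫ ((sig cond e b') ^ ((0:ℤ))).hom = _
  simp
  erw [eqToHom_refl, eqToHom_refl, Category.id_comp, Category.comp_id]

lemma desc_fac_right (cond : f ⋙ uF = gF a₀ a₁ ψ hne ⋙ vF)
    (hψ : f.map ψ.hom = eqToHom e) :
    incF a₁ f (b0 a₀ a₁ f) ⋙ descW cond hψ = vF := by
  refine CategoryTheory.Functor.ext (fun x => (objEq cond x).symm) (fun x y m => ?_)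
  show uF.map (f.map m.1) ≫ ((sig cond e (f.obj y.1)) ^ (m.2.down)).hom = _
  rw [vmap_decomp m, mapv cond m.1, sig_image_zpow cond y]
  simp
  erw [eqToHom_trans_assoc, eqToHom_refl, Category.id_comp]
  rfl

lemma m_tau (cond : f ⋙ uF = gF a₀ a₁ ψ hne ⋙ vF)
    (m : DD (b0 a₀ a₁ f) ⥤ E) (h1 : topF (b0 a₀ a₁ f) ⋙ m = uF)
    (h2 : incF a₁ f (b0 a₀ a₁ f) ⋙ m = vF) (b' : B) (n : ℤ) :
    m.map (dmk (b0 a₀ a₁ f) (𝟙 b') n)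
      = eqToHom (Functor.congr_obj h1 b') ≫ ((sig cond e b') ^ n).hom
        ≫ eqToHom (Functor.congr_obj h1 b').symm := by
  set x := (EJ a₀ hne f e b').1 with hx
  set J := (EJ a₀ hne f e b').2 with hJ
  have hd : dmk (b0 a₀ a₁ f) (𝟙 b') n
      = (topF (b0 a₀ a₁ f)).map J.inv ≫ (incF a₁ f (b0 a₀ a₁ f)).map (cmk (𝟙 x.1) n)
        ≫ (topF (b0 a₀ a₁ f)).map J.hom := by
    rw [topF_map, topF_map, incF_map]
    erw [DD_comp]
    exact dmk_eq _ (by erw [f.map_id, Category.id_comp, Iso.inv_hom_id]) (by simp)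
  have c1 : m.map ((topF (b0 a₀ a₁ f)).map J.inv)
      = eqToHom (Functor.congr_obj h1 b') ≫ uF.map J.inv
        ≫ eqToHom (Functor.congr_obj h1 (f.obj x.1)).symm := Functor.congr_hom h1 J.inv
  have c3 : m.map ((topF (b0 a₀ a₁ f)).map J.hom)
      = eqToHom (Functor.congr_obj h1 (f.obj x.1)) ≫ uF.map J.hom
        ≫ eqToHom (Functor.congr_obj h1 b').symm := Functor.congr_hom h1 J.hom
  have c2 : m.map ((incF a₁ f (b0 a₀ a₁ f)).map (cmk (𝟙 x.1) n))
      = eqToHom (Functor.congr_obj h2 x) ≫ vF.map (cmk (𝟙 x.1) n)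
        ≫ eqToHom (Functor.congr_obj h2 x).symm := Functor.congr_hom h2 (cmk (𝟙 x.1) n)
  rw [hd]
  erw [m.map_comp, m.map_comp]
  erw [c1, c2, c3]
  rw [vmap_z x n, sig_zpow_hom cond b' n]
  rw [show (Kiso cond e b').inv = uF.map J.inv ≫ eqToHom (objEq cond x).symm from by
    rw [Kiso]; rfl]
  rw [show (Kiso cond e b').hom = eqToHom (objEq cond x) ≫ uF.map J.hom from by
    rw [Kiso]; rfl]
  simp
  erw [eqToHom_trans_assoc, eqToHom_trans_assoc]

lemma desc_uniq (cond : f ⋙ uF = gF a₀ a₁ ψ hne ⋙ vF)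
    (hψ : f.map ψ.hom = eqToHom e)
    (m : DD (b0 a₀ a₁ f) ⥤ E) (h1 : topF (b0 a₀ a₁ f) ⋙ m = uF)
    (h2 : incF a₁ f (b0 a₀ a₁ f) ⋙ m = vF) : m = descW cond hψ := by
  refine CategoryTheory.Functor.ext (fun b => Functor.congr_obj h1 b.as) (fun b b' q => ?_)
  induction q using Quot.ind with | _ p => ?_
  have hdq : (Quot.mk (DRel (b0 a₀ a₁ f)) p : b ⟶ b')
      = (topF (b0 a₀ a₁ f)).map p.1 ≫ dmk (b0 a₀ a₁ f) (𝟙 b'.as) p.2.down := by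
    rw [topF_map]
    erw [DD_comp]
    exact dmk_eq _ (by simp) (by simp)
  have c1 : m.map ((topF (b0 a₀ a₁ f)).map p.1)
      = eqToHom (Functor.congr_obj h1 b.as) ≫ uF.map p.1
        ≫ eqToHom (Functor.congr_obj h1 b'.as).symm := Functor.congr_hom h1 p.1
  conv_lhs => rw [hdq]
  erw [m.map_comp]
  erw [c1, m_tau (e := e) cond m h1 h2 b'.as p.2.down]
  show _ = eqToHom _ ≫ (uF.map p.1 ≫ ((sig cond e b'.as) ^ (p.2.down)).hom) ≫ eqToHom _
  simp
  erw [eqToHom_trans_assoc, eqToHom_refl, Category.id_comp]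

end DescW



/-! ### Assembling the pushout squares and the main theorem -/

open CategoryTheory.Limits

section Main

variable {A B : Cat.{u, u}} (f : A ⟶ B)

/-- The identity pushout square. -/
theorem identity_isPushout : IsPushout f (𝟙 A) (𝟙 B) f := by
  have comm : f ≫ (𝟙 B) = (𝟙 A) ≫ f := by simp
  refine IsPushout.of_isColimit (PushoutCocone.IsColimit.mk comm
    (fun s => s.inl) (fun s => Category.id_comp _) (fun s => ?_) (fun s m h1 h2 => ?_)
    )
  · show f ≫ s.inl = s.inr
    have := s.condition
    rw [Category.id_comp] at this
    exact this
  · show m = s.inl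
    rw [← h1, Category.id_comp]

theorem collapse_isPushout {a₀ a₁ : A} (ψ : a₀ ≅ a₁) (hne : a₀ ≠ a₁)
    (e : f.toFunctor.obj a₀ = f.toFunctor.obj a₁) (hψ : f.toFunctor.map ψ.hom = eqToHom e)
    [f.toFunctor.Full] [f.toFunctor.Faithful] [f.toFunctor.EssSurj] :
    IsPushout (C := Cat.{u, u}) f
      (show A ⟶ Cat.of (CC a₁) from (gF a₀ a₁ ψ hne).toCatHom)
      (show B ⟶ Cat.of (DD (b0 a₀ a₁ f.toFunctor)) from (topF (b0 a₀ a₁ f.toFunctor)).toCatHom)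
      (show Cat.of (CC a₁) ⟶ Cat.of (DD (b0 a₀ a₁ f.toFunctor)) from
        (incF a₁ f.toFunctor (b0 a₀ a₁ f.toFunctor)).toCatHom) := by
  have comm : f ≫ (show B ⟶ Cat.of (DD (b0 a₀ a₁ f.toFunctor)) from
        (topF (b0 a₀ a₁ f.toFunctor)).toCatHom)
      = (show A ⟶ Cat.of (CC a₁) from (gF a₀ a₁ ψ hne).toCatHom)
        ≫ (show Cat.of (CC a₁) ⟶ Cat.of (DD (b0 a₀ a₁ f.toFunctor)) from
          (incF a₁ f.toFunctor (b0 a₀ a₁ f.toFunctor)).toCatHom) :=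
    Cat.ext (square_eq a₀ a₁ ψ hne f.toFunctor e hψ)
  refine IsPushout.of_isColimit (PushoutCocone.IsColimit.mk comm
    (fun s => (descW (hne := hne) (uF := s.inl.toFunctor) (vF := s.inr.toFunctor)
      (congrArg Cat.Hom.toFunctor s.condition) hψ).toCatHom)
    (fun s => Cat.ext (desc_fac_left (hne := hne) (uF := s.inl.toFunctor) (vF := s.inr.toFunctor)
      (congrArg Cat.Hom.toFunctor s.condition) hψ))
    (fun s => Cat.ext (desc_fac_right (hne := hne) (uF := s.inl.toFunctor) (vF := s.inr.toFunctor)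
      (congrArg Cat.Hom.toFunctor s.condition) hψ))
    (fun s m h1 h2 => Cat.ext (desc_uniq (hne := hne) (uF := s.inl.toFunctor) (vF := s.inr.toFunctor)
      (congrArg Cat.Hom.toFunctor s.condition) hψ m.toFunctor
      (congrArg Cat.Hom.toFunctor h1) (congrArg Cat.Hom.toFunctor h2))))

end Main

end CouniversalWE

open CouniversalWE

/-- Every couniversal weak equivalence in the canonical model structure on `Cat`
is an acyclic cofibration: if every pushout of a functor `f : A ⟶ B` is an
equivalence of categories, then `f` is itself an equivalence of categories and
is injective on objects. -/
theorem couniversal_weak_equivalence_is_acyclic_cofibration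
    {A B : Cat.{u, u}} (f : A ⟶ B)
    (h : ∀ (C : Cat.{u, u}) (g : A ⟶ C) (D : Cat.{u, u}) (top : B ⟶ D) (inc : C ⟶ D),
      IsPushout f g top inc → inc.toFunctor.IsEquivalence) :
    f.toFunctor.IsEquivalence ∧ Function.Injective f.toFunctor.obj := by
  have hfe : f.toFunctor.IsEquivalence := h A (𝟙 A) B (𝟙 B) f (identity_isPushout f)
  refine ⟨hfe, ?_⟩
  intro a₀ a₁ e
  by_contra hne
  haveI : f.toFunctor.Full := hfe.full
  haveI : f.toFunctor.Faithful := hfe.faithful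
  haveI : f.toFunctor.EssSurj := hfe.essSurj
  set ψ : a₀ ≅ a₁ := f.toFunctor.preimageIso (eqToIso e) with hψdef
  have hψ : f.toFunctor.map ψ.hom = eqToHom e := f.toFunctor.map_preimage _
  have hpush := collapse_isPushout f ψ hne e hψ
  have hinc := h _ _ _ _ _ hpush
  haveI : (incF a₁ f.toFunctor (b0 a₀ a₁ f.toFunctor)).Faithful := hinc.faithful
  have him : (incF a₁ f.toFunctor (b0 a₀ a₁ f.toFunctor)).map (cmk (x := c0 a₀ a₁ hne) (𝟙 (c0 a₀ a₁ hne).1) 0)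
      = (incF a₁ f.toFunctor (b0 a₀ a₁ f.toFunctor)).map (cmk (x := c0 a₀ a₁ hne) (𝟙 (c0 a₀ a₁ hne).1) 1) := by
    rw [incF_map, incF_map]
    exact dmk_eq_of_fact _ _ _ rfl (Fact.of_dom rfl _)
  have hmap := (incF a₁ f.toFunctor (b0 a₀ a₁ f.toFunctor)).map_injective him
  have h01 : (0 : ℤ) = 1 := congrArg (fun q => q.2.down) hmap
  omega
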